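/- For s = ε i q^{m+1/2} with ε ∈ {1,-1} and m ∈ Z, the subspaces V_{+1} and V_{-1} spanned by the vectors |j⟩_ε̃ := |-m+j⟩ + ε̃ i (-1)^j |-m-j-1⟩, j = 0,1,2,..., (for ε̃ = 1 and ε̃ = -1 respectively) are invariant under the operators R_{rs}(I), R_{rs}(T1), and R_{rs}(T2); hence R_{rs} is reducible. -/

import Mathlib

noncomputable section

/-- The basis vector |m⟩, m ∈ ℤ. -/
def e (m : ℤ) : ℤ →₀ ℂ := Finsupp.single m 1

/-- A linear operator on the space with basis {|m⟩ : m ∈ ℤ}, given by its values on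
the basis vectors. -/
def op (f : ℤ → (ℤ →₀ ℂ)) : (ℤ →₀ ℂ) →ₗ[ℂ] (ℤ →₀ ℂ) :=
  Finsupp.lift _ _ _ f

variable (q sq r s : ℂ)

/-- R(I)|m⟩ = i((sqᵐ - s⁻¹q⁻ᵐ)/(q-q⁻¹))|m⟩. -/
def RI : (ℤ →₀ ℂ) →ₗ[ℂ] (ℤ →₀ ℂ) :=
  op fun m => (Complex.I * (s * q ^ m - s⁻¹ * q ^ (-m)) / (q - q⁻¹)) • e m

/-- R(T2)|m⟩ = (r/(sqᵐ + s⁻¹q⁻ᵐ))(|m+1⟩ + |m-1⟩). -/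
def RT2 : (ℤ →₀ ℂ) →ₗ[ℂ] (ℤ →₀ ℂ) :=
  op fun m => (r / (s * q ^ m + s⁻¹ * q ^ (-m))) • (e (m + 1) + e (m - 1))

/-- R(T1)|m⟩ = (i q^{1/2} r/(sqᵐ + s⁻¹q⁻ᵐ))(sqᵐ|m+1⟩ - s⁻¹q⁻ᵐ|m-1⟩),
where sq = q^{1/2}. -/
def RT1 : (ℤ →₀ ℂ) →ₗ[ℂ] (ℤ →₀ ℂ) :=
  op fun m => (Complex.I * sq * r / (s * q ^ m + s⁻¹ * q ^ (-m))) •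
    ((s * q ^ m) • e (m + 1) - (s⁻¹ * q ^ (-m)) • e (m - 1))

end


/-- The vector |j⟩_ε̃ := |-m+j⟩ + ε̃ i (-1)ʲ |-m-j-1⟩, j = 0,1,2,…. -/
noncomputable def vv (m : ℤ) (te : ℂ) (j : ℕ) : ℤ →₀ ℂ :=
  e (-m + j) + (te * Complex.I * (-1) ^ j) • e (-m - j - 1)

/-- The subspace V_ε̃ spanned by the vectors |j⟩_ε̃, j ≥ 0. -/
noncomputable def Vsub (m : ℤ) (te : ℂ) : Submodule ℂ (ℤ →₀ ℂ) :=
  Submodule.span ℂ (Set.range (vv m te))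

lemma op_e (f : ℤ → (ℤ →₀ ℂ)) (n : ℤ) : op f (e n) = f n := by
  rw [op, Finsupp.lift_apply, e]
  exact (Finsupp.sum_single_index (by simp)).trans (one_smul ℂ (f n))

/-- For s = ε i q^{m+1/2} (ε = ±1, m ∈ ℤ), the subspaces V_{+1} and
V_{-1} are invariant under R_{rs}(I), R_{rs}(T1), R_{rs}(T2); hence R_{rs} is
reducible. -/
theorem stmt11 (q sq r ε : ℂ) (hq : q ≠ 0) (hsq : sq ^ 2 = q)
    (hroot : ∀ n : ℕ, n ≠ 0 → q ^ n ≠ 1)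
    (hr : r ≠ 0) (hε : ε = 1 ∨ ε = -1) (m : ℤ)
    (s : ℂ) (hs : s = ε * Complex.I * q ^ m * sq) :
    (∀ te : ℂ, (te = 1 ∨ te = -1) → ∀ x ∈ Vsub m te,
        RI q s x ∈ Vsub m te ∧ RT1 q sq r s x ∈ Vsub m te ∧ RT2 q r s x ∈ Vsub m te) ∧
    Vsub m 1 ≠ ⊥ ∧ Vsub m 1 ≠ ⊤ := by
  have hsq0 : sq ≠ 0 := by
    intro h; rw [h] at hsq; simp at hsq; exact hq hsq.symm
  have hε0 : ε ≠ 0 := by rcases hε with h|h <;> rw [h] <;> norm_num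
  have hε2 : ε ^ 2 = 1 := by rcases hε with h|h <;> rw [h] <;> norm_num
  have hqz : ∀ k : ℤ, q ^ k ≠ 0 := fun k => zpow_ne_zero k hq
  have hzone : ∀ k : ℤ, k ≠ 0 → q ^ k ≠ 1 := by
    intro k hk
    rcases lt_trichotomy k 0 with h|h|h
    · intro hcon
      have h2 : q ^ (-k) = 1 := by rw [zpow_neg, hcon]; simp
      have h3 := hroot (-k).toNat (by omega)
      rw [← zpow_natCast, Int.toNat_of_nonneg (by omega)] at h3
      exact h3 h2
    · omega
    · intro hcon
      have h3 := hroot k.toNat (by omega)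
      rw [← zpow_natCast, Int.toNat_of_nonneg (by omega)] at h3
      exact h3 hcon
  have hs0 : s ≠ 0 := by
    rw [hs]
    exact mul_ne_zero (mul_ne_zero (mul_ne_zero hε0 Complex.I_ne_zero) (hqz m)) hsq0
  have hs2 : s ^ 2 = -q ^ (2*m+1) := by
    rw [hs, show (2*m+1 : ℤ) = m + m + 1 by ring, zpow_add₀ hq, zpow_add₀ hq, zpow_one]
    linear_combination (q^m*q^m*sq^2*Complex.I^2)*hε2 + (q^m*q^m*sq^2)*Complex.I_sq - (q^m*q^m)*hsq
  have hq2m : q ^ (2*m+1) = -s^2 := by linear_combination hs2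
  have hkey : ∀ a : ℤ, s * q ^ a + s⁻¹ * q ^ (a + (2*m+1)) = 0 := by
    intro a
    rw [zpow_add₀ hq, hq2m]
    field_simp
    ring
  have hI2 : Complex.I ^ 2 = -1 := Complex.I_sq
  -- vector identities
  have hRIs : ∀ te : ℂ, ∀ j : ℕ, RI q s (vv m te j) =
      (Complex.I * (s * q ^ (-m+(j:ℤ)) - s⁻¹ * q ^ (-(-m+(j:ℤ)))) / (q - q⁻¹)) • vv m te j := by
    intro te j
    have hA := hkey (-1 + (-m - (j:ℤ)))
    rw [show (-1 + (-m - (j:ℤ)) + (2*m+1)) = m - (j:ℤ) by ring] at hA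
    have hB := hkey (-m + (j:ℤ))
    rw [show (-m + (j:ℤ) + (2*m+1)) = 1 + m + (j:ℤ) by ring] at hB
    simp only [vv, map_add, map_smul, RI, op_e]
    push_cast
    ring_nf
    rw [show (-1 - m - (j:ℤ)) = -1 + (-m - (j:ℤ)) by ring]
    match_scalars
    · ring
    · linear_combination (te * (-1:ℂ)^j * Complex.I^2 * (q - q⁻¹)⁻¹) * (hA - hB)
  -- succ case facts
  have hsuccD : ∀ k : ℕ, (s * q ^ (-2 + (-m - (k:ℤ))) + s⁻¹ * q ^ (2 + m + (k:ℤ)))⁻¹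
      = -(s * q ^ (1 - m + (k:ℤ)) + s⁻¹ * q ^ (-1 + (m - (k:ℤ))))⁻¹ := by
    intro k
    have h1 := hkey (-2 + (-m - (k:ℤ)))
    rw [show (-2 + (-m - (k:ℤ)) + (2*m+1)) = -1 + (m - (k:ℤ)) by ring] at h1
    have h2 := hkey (1 - m + (k:ℤ))
    rw [show (1 - m + (k:ℤ) + (2*m+1)) = 2 + m + (k:ℤ) by ring] at h2
    rw [show s * q ^ (-2 + (-m - (k:ℤ))) + s⁻¹ * q ^ (2 + m + (k:ℤ))
        = -(s * q ^ (1 - m + (k:ℤ)) + s⁻¹ * q ^ (-1 + (m - (k:ℤ)))) by linear_combination h1 + h2,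
      ← neg_inv]
  have hzD : (s * q ^ (-1 - m) + s⁻¹ * q ^ (1 + m))⁻¹ = -(s * q ^ (-m) + s⁻¹ * q ^ m)⁻¹ := by
    have hE := hkey (-1 - m)
    rw [show (-1 - m + (2*m+1)) = m by ring] at hE
    have hF := hkey (-m)
    rw [show (-m + (2*m+1)) = 1 + m by ring] at hF
    rw [show s * q ^ (-1 - m) + s⁻¹ * q ^ (1 + m)
        = -(s * q ^ (-m) + s⁻¹ * q ^ m) by linear_combination hE + hF, ← neg_inv]
  have hT1s : ∀ te : ℂ, ∀ k : ℕ, RT1 q sq r s (vv m te (k+1)) =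
      (Complex.I * sq * r * (s * q ^ (-m+(k:ℤ)+1)) / (s * q ^ (-m+(k:ℤ)+1) + s⁻¹ * q ^ (-(-m+(k:ℤ)+1)))) • vv m te (k+2)
      - (Complex.I * sq * r * (s⁻¹ * q ^ (-(-m+(k:ℤ)+1))) / (s * q ^ (-m+(k:ℤ)+1) + s⁻¹ * q ^ (-(-m+(k:ℤ)+1)))) • vv m te k := by
    intro te k
    have h1 := hkey (-2 + (-m - (k:ℤ)))
    rw [show (-2 + (-m - (k:ℤ)) + (2*m+1)) = -1 + (m - (k:ℤ)) by ring] at h1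
    have h2 := hkey (1 - m + (k:ℤ))
    rw [show (1 - m + (k:ℤ) + (2*m+1)) = 2 + m + (k:ℤ) by ring] at h2
    simp only [vv, map_add, map_smul, map_sub, RT1, op_e]
    push_cast
    ring_nf
    rw [show (-2 - m - (k:ℤ)) = -2 + (-m - (k:ℤ)) by ring, show (-1 + m - (k:ℤ)) = -1 + (m - (k:ℤ)) by ring]
    rw [hsuccD k]
    match_scalars
    · ring
    · ring
    · linear_combination (Complex.I^2 * te * (-1:ℂ)^k * sq * r
        * (s * q ^ (1 - m + (k:ℤ)) + s⁻¹ * q ^ (-1 + (m - (k:ℤ))))⁻¹) * h1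
    · linear_combination (-(Complex.I^2 * te * (-1:ℂ)^k * sq * r
        * (s * q ^ (1 - m + (k:ℤ)) + s⁻¹ * q ^ (-1 + (m - (k:ℤ))))⁻¹)) * h2
  have hT1z : ∀ te : ℂ, te ^ 2 = 1 → RT1 q sq r s (vv m te 0) =
      (Complex.I * sq * r * (s * q ^ (-m)) / (s * q ^ (-m) + s⁻¹ * q ^ m)) • vv m te 1
      + (te * Complex.I * (Complex.I * sq * r * (s * q ^ (-m-1)) / (s * q ^ (-m-1) + s⁻¹ * q ^ (m+1)))) • vv m te 0 := by
    intro te hte2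
    have hE := hkey (-1 - m)
    rw [show (-1 - m + (2*m+1)) = m by ring] at hE
    have hF := hkey (-m)
    rw [show (-m + (2*m+1)) = 1 + m by ring] at hF
    simp only [vv, map_add, map_smul, RT1, op_e]
    push_cast
    ring_nf
    rw [hzD]
    match_scalars
    · ring
    · linear_combination (Complex.I^3 * sq * r * s * q^(-1-m) * (s * q ^ (-m) + s⁻¹ * q ^ m)⁻¹) * hte2
        + (Complex.I * sq * r * s * q^(-1-m) * (s * q ^ (-m) + s⁻¹ * q ^ m)⁻¹) * hI2
        + (-(Complex.I * sq * r * (s * q ^ (-m) + s⁻¹ * q ^ m)⁻¹)) * hE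
    · ring
    · linear_combination (Complex.I^2 * te * sq * r * (s * q ^ (-m) + s⁻¹ * q ^ m)⁻¹) * hF
  have hT2z : ∀ te : ℂ, te ^ 2 = 1 → RT2 q r s (vv m te 0) =
      (r / (s * q ^ (-m) + s⁻¹ * q ^ m)) • vv m te 1
      + (-(te * Complex.I) * (r / (s * q ^ (-m) + s⁻¹ * q ^ m))) • vv m te 0 := by
    intro te hte2
    simp only [vv, map_add, map_smul, RT2, op_e]
    push_cast
    ring_nf
    rw [hzD]
    match_scalars
    · ring
    · linear_combination (-(r * (s * q ^ (-m) + s⁻¹ * q ^ m)⁻¹)) * hte2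
        + (r * (s * q ^ (-m) + s⁻¹ * q ^ m)⁻¹ * te^2) * hI2
    · ring
    · ring
  have hT2s : ∀ te : ℂ, ∀ k : ℕ, RT2 q r s (vv m te (k+1)) =
      (r / (s * q ^ (-m+(k:ℤ)+1) + s⁻¹ * q ^ (-(-m+(k:ℤ)+1)))) • (vv m te (k+2) + vv m te k) := by
    intro te k
    simp only [vv, map_add, map_smul, RT2, op_e]
    push_cast
    ring_nf
    rw [show (-2 - m - (k:ℤ)) = -2 + (-m - (k:ℤ)) by ring, show (-1 + m - (k:ℤ)) = -1 + (m - (k:ℤ)) by ring]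
    rw [hsuccD k]
    match_scalars <;> ring
  -- memberships
  have hgen : ∀ te : ℂ, ∀ j : ℕ, vv m te j ∈ Vsub m te :=
    fun te j => Submodule.subset_span ⟨j, rfl⟩
  have hmem : ∀ te : ℂ, te ^ 2 = 1 → ∀ j : ℕ,
      RI q s (vv m te j) ∈ Vsub m te ∧ RT1 q sq r s (vv m te j) ∈ Vsub m te ∧
      RT2 q r s (vv m te j) ∈ Vsub m te := by
    intro te hte2 j
    refine ⟨?_, ?_, ?_⟩
    · rw [hRIs te j]; exact Submodule.smul_mem _ _ (hgen te j)
    · cases j with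
      | zero => rw [hT1z te hte2]
                exact add_mem (Submodule.smul_mem _ _ (hgen te 1)) (Submodule.smul_mem _ _ (hgen te 0))
      | succ k => rw [hT1s te k]
                  exact sub_mem (Submodule.smul_mem _ _ (hgen te (k+2))) (Submodule.smul_mem _ _ (hgen te k))
    · cases j with
      | zero => rw [hT2z te hte2]
                exact add_mem (Submodule.smul_mem _ _ (hgen te 1)) (Submodule.smul_mem _ _ (hgen te 0))
      | succ k => rw [hT2s te k]
                  exact Submodule.smul_mem _ _ (add_mem (hgen te (k+2)) (hgen te k))
  refine ⟨?_, ?_, ?_⟩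
  · intro te hte x hx
    have hte2 : te ^ 2 = 1 := by rcases hte with h|h <;> rw [h] <;> norm_num
    have hinv : ∀ (T : (ℤ →₀ ℂ) →ₗ[ℂ] (ℤ →₀ ℂ)), (∀ j : ℕ, T (vv m te j) ∈ Vsub m te) →
        T x ∈ Vsub m te := by
      intro T hT
      have hle : Vsub m te ≤ Submodule.comap T (Vsub m te) := by
        rw [Vsub, Submodule.span_le]
        rintro _ ⟨j, rfl⟩
        exact hT j
      exact hle hx
    exact ⟨hinv _ (fun j => (hmem te hte2 j).1), hinv _ (fun j => (hmem te hte2 j).2.1),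
      hinv _ (fun j => (hmem te hte2 j).2.2)⟩
  · intro hbot
    have h0 : vv m 1 0 ∈ Vsub m 1 := hgen 1 0
    rw [hbot, Submodule.mem_bot] at h0
    have h1 : (vv m 1 0) (-m) = 1 := by
      simp [vv, e, Finsupp.single_apply]
    rw [h0] at h1
    simp at h1
  · intro htop
    set φ : (ℤ →₀ ℂ) →ₗ[ℂ] ℂ :=
      (Finsupp.lapply (-m-1) : (ℤ →₀ ℂ) →ₗ[ℂ] ℂ) - Complex.I • (Finsupp.lapply (-m)) with hφ
    have hker : Vsub m 1 ≤ LinearMap.ker φ := by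
      rw [Vsub, Submodule.span_le]
      rintro _ ⟨j, rfl⟩
      simp only [SetLike.mem_coe, LinearMap.mem_ker, hφ, LinearMap.sub_apply,
        LinearMap.smul_apply, Finsupp.lapply_apply, smul_eq_mul]
      cases j with
      | zero =>
        simp [vv, e, Finsupp.single_apply]
      | succ k =>
        have e1 : ((-m + ((k:ℕ)+1:ℕ) : ℤ) ≠ -m - 1) := by push_cast; omega
        have e2 : ((-m - ((k:ℕ)+1:ℕ) - 1 : ℤ) ≠ -m - 1) := by push_cast; omega
        have e3 : ((-m + ((k:ℕ)+1:ℕ) : ℤ) ≠ -m) := by push_cast; omega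
        have e4 : ((-m - ((k:ℕ)+1:ℕ) - 1 : ℤ) ≠ -m) := by push_cast; omega
        simp only [vv, e, Finsupp.coe_add, Finsupp.coe_smul, Pi.add_apply, Pi.smul_apply,
          Finsupp.single_apply, smul_eq_mul]
        push_cast
        split_ifs <;> first | omega | ring
    have hE : e (-m-1) ∈ Vsub m 1 := htop ▸ Submodule.mem_top
    have := hker hE
    rw [LinearMap.mem_ker, hφ] at this
    simp [e, Finsupp.single_apply] at this
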